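/- For s > 2, digits c_1,…,c_{n-1} ∈ {1,…,s-1}, and any p with 1 ≤ p ≤ s-2, one has inf Δ'_{c_1…c_{n-1}p} > sup Δ'_{c_1…c_{n-1}[p+1]}; equivalently, (s^{s-1}−1)(p(s−1)^2 − s) + s(s−1)^2 > 0 and the difference of the two endpoint formulas equals ((s^{s-1}−1)(p(s−1)^2−s) + s(s−1)^2) / ((s−1)(s^{s-1}−1)s^{c_1+⋯+c_{n-1}+p+1}). -/

import Mathlib

open Finset

/-- The term of the series: `c n / s ^ (c 1 + ... + c (n+1))` (0-indexed). -/
noncomputable def sTerm (s : ℕ) (c : ℕ → ℕ) (n : ℕ) : ℝ :=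
  (c n : ℝ) / (s : ℝ) ^ (∑ k ∈ Finset.range (n + 1), c k)

/-- `x = Σ_{k=1}^∞ c_k / s^{c_1+⋯+c_k}`. -/
noncomputable def sVal (s : ℕ) (c : ℕ → ℕ) : ℝ := ∑' n : ℕ, sTerm s c n

/-- The sequence `(c_k)` has all terms in `{1, ..., s-1}`. -/
def sValid (s : ℕ) (c : ℕ → ℕ) : Prop := ∀ k, 1 ≤ c k ∧ c k ≤ s - 1

/-- The set `S_{(s,0)}`. -/
def Sset (s : ℕ) : Set ℝ := { x | ∃ c : ℕ → ℕ, sValid s c ∧ x = sVal s c }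

/-- The cylinder `Δ'_{c_1 ... c_n}` of rank `n` with base the first `n` terms of `c`. -/
def cyl (s n : ℕ) (c : ℕ → ℕ) : Set ℝ :=
  { x | ∃ c' : ℕ → ℕ, sValid s c' ∧ (∀ k < n, c' k = c k) ∧ x = sVal s c' }

/-- The cylinder `Δ'_{c_1 ... c_n p}`: prefix of length `n` from `c`, next digit `p`. -/
def cylExt (s n : ℕ) (c : ℕ → ℕ) (p : ℕ) : Set ℝ :=
  { x | ∃ c' : ℕ → ℕ, sValid s c' ∧ (∀ k < n, c' k = c k) ∧ c' n = p ∧ x = sVal s c' }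

/-- `g_n = Σ_{k=1}^n c_k / s^{c_1+⋯+c_k}`. -/
noncomputable def gPart (s n : ℕ) (c : ℕ → ℕ) : ℝ := ∑ k ∈ Finset.range n, sTerm s c k

open Filter


lemma my_geom_aux (r : ℝ) (hr : 1 ≤ r) {d e : ℕ} (hde : d ≤ e) :
    (e : ℝ) * (r ^ d - 1) ≤ (d : ℝ) * (r ^ e - 1) := by
  have h1 : ∀ n : ℕ, r ^ n - 1 = (∑ i ∈ range n, r ^ i) * (r - 1) := fun n => (geom_sum_mul r n).symm
  rw [h1, h1]
  have hr0 : 0 ≤ r - 1 := by linarith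
  have key : (e : ℝ) * (∑ i ∈ range d, r ^ i) ≤ (d : ℝ) * (∑ i ∈ range e, r ^ i) := by
    have hsplit : (∑ i ∈ range e, r ^ i) = (∑ i ∈ range d, r ^ i) + ∑ i ∈ Ico d e, r ^ i := by
      rw [range_eq_Ico, range_eq_Ico]
      exact (Finset.sum_Ico_consecutive (fun i => r ^ i) (Nat.zero_le d) hde).symm
    have h2 : (∑ i ∈ range d, r ^ i) ≤ (d : ℝ) * r ^ d := by
      calc (∑ i ∈ range d, r ^ i) ≤ ∑ i ∈ range d, r ^ d := by
            apply Finset.sum_le_sum; intro i hi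
            exact pow_le_pow_right₀ hr (le_of_lt (mem_range.mp hi))
        _ = (d : ℝ) * r ^ d := by rw [Finset.sum_const, card_range, nsmul_eq_mul]
    have h3 : ((e : ℝ) - d) * r ^ d ≤ ∑ i ∈ Ico d e, r ^ i := by
      have h4 : ((e - d : ℕ) : ℝ) * r ^ d ≤ ∑ i ∈ Ico d e, r ^ i := by
        calc ((e - d : ℕ) : ℝ) * r ^ d = ∑ _i ∈ Ico d e, r ^ d := by
              rw [Finset.sum_const, Nat.card_Ico, nsmul_eq_mul]
          _ ≤ ∑ i ∈ Ico d e, r ^ i := by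
              apply Finset.sum_le_sum; intro i hi
              exact pow_le_pow_right₀ hr (mem_Ico.mp hi).1
      rwa [Nat.cast_sub hde] at h4
    have hd0 : (0:ℝ) ≤ (d:ℝ) := Nat.cast_nonneg d
    have hed0 : (0:ℝ) ≤ (e:ℝ) - d := by
      have : (d:ℝ) ≤ e := by exact_mod_cast hde
      linarith
    rw [hsplit]
    nlinarith [mul_le_mul_of_nonneg_left h2 hed0, mul_le_mul_of_nonneg_left h3 hd0]
  nlinarith [mul_le_mul_of_nonneg_right key hr0]

lemma my_sum_ge (c : ℕ → ℕ) (hc : ∀ k, 1 ≤ c k) (n : ℕ) : n ≤ ∑ k ∈ range n, c k := by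
  calc n = ∑ k ∈ range n, 1 := by simp
    _ ≤ _ := Finset.sum_le_sum fun k _ => hc k

lemma my_sTerm_nonneg (s : ℕ) (c : ℕ → ℕ) (n : ℕ) : 0 ≤ sTerm s c n := by
  unfold sTerm; positivity

lemma my_sTerm_le_geom (s : ℕ) (hs : 2 < s) (c : ℕ → ℕ) (hc : ∀ k, 1 ≤ c k) (n : ℕ) :
    sTerm s c n ≤ (1 / (s:ℝ)) ^ n := by
  have hs1 : (1:ℝ) < s := by exact_mod_cast Nat.lt_of_lt_of_le (by norm_num) hs.le
  have hS : n + c n ≤ ∑ k ∈ range (n+1), c k := by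
    rw [Finset.sum_range_succ]
    exact Nat.add_le_add_right (my_sum_ge c hc n) _
  have h1 : (c n : ℝ) ≤ (s:ℝ) ^ (c n) := by
    exact_mod_cast (Nat.lt_pow_self (n := c n) (by omega : 1 < s)).le
  have h2 : (s:ℝ) ^ (n + c n) ≤ (s:ℝ) ^ (∑ k ∈ range (n+1), c k) :=
    pow_le_pow_right₀ hs1.le hS
  have h3 := div_le_div₀ (by positivity) h1 (by positivity) h2
  refine h3.trans (le_of_eq ?_)
  rw [pow_add, one_div, inv_pow]
  field_simp

lemma my_sTerm_summable (s : ℕ) (hs : 2 < s) (c : ℕ → ℕ) (hc : ∀ k, 1 ≤ c k) :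
    Summable (sTerm s c) := by
  have hs1 : (1:ℝ) < s := by exact_mod_cast Nat.lt_of_lt_of_le (by norm_num) hs.le
  have hmaj : Summable (fun n : ℕ => (1/(s:ℝ)) ^ n) := by
    apply summable_geometric_of_lt_one (by positivity)
    rw [div_lt_one (by linarith)]; linarith
  exact Summable.of_nonneg_of_le (my_sTerm_nonneg s c) (my_sTerm_le_geom s hs c hc) hmaj

lemma my_step_le (s : ℕ) (hs : 2 < s) (c : ℕ → ℕ) (K : ℝ) (k : ℕ)
    (hdK : (c k : ℝ) ≤ K * ((s:ℝ) ^ (c k) - 1)) :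
    sTerm s c k ≤ K / (s:ℝ) ^ (∑ j ∈ range k, c j) - K / (s:ℝ) ^ (∑ j ∈ range (k+1), c j) := by
  have hrw : ∑ j ∈ range (k+1), c j = (∑ j ∈ range k, c j) + c k := Finset.sum_range_succ c k
  have hP : (0:ℝ) < (s:ℝ) ^ (∑ j ∈ range k, c j) := by positivity
  have hQ : (0:ℝ) < (s:ℝ) ^ (c k) := by positivity
  unfold sTerm
  rw [hrw, pow_add]
  have heq : K / (s:ℝ) ^ (∑ j ∈ range k, c j)
      - K / ((s:ℝ) ^ (∑ j ∈ range k, c j) * (s:ℝ) ^ (c k))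
      = (K * ((s:ℝ) ^ (c k) - 1)) / ((s:ℝ) ^ (∑ j ∈ range k, c j) * (s:ℝ) ^ (c k)) := by
    field_simp
  rw [heq, div_le_div_iff_of_pos_right (by positivity)]
  exact hdK

lemma my_step_ge (s : ℕ) (hs : 2 < s) (c : ℕ → ℕ) (K : ℝ) (k : ℕ)
    (hdK : K * ((s:ℝ) ^ (c k) - 1) ≤ (c k : ℝ)) :
    K / (s:ℝ) ^ (∑ j ∈ range k, c j) - K / (s:ℝ) ^ (∑ j ∈ range (k+1), c j) ≤ sTerm s c k := by
  have hrw : ∑ j ∈ range (k+1), c j = (∑ j ∈ range k, c j) + c k := Finset.sum_range_succ c k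
  have hP : (0:ℝ) < (s:ℝ) ^ (∑ j ∈ range k, c j) := by positivity
  have hQ : (0:ℝ) < (s:ℝ) ^ (c k) := by positivity
  unfold sTerm
  rw [hrw, pow_add]
  have heq : K / (s:ℝ) ^ (∑ j ∈ range k, c j)
      - K / ((s:ℝ) ^ (∑ j ∈ range k, c j) * (s:ℝ) ^ (c k))
      = (K * ((s:ℝ) ^ (c k) - 1)) / ((s:ℝ) ^ (∑ j ∈ range k, c j) * (s:ℝ) ^ (c k)) := by
    field_simp
  rw [heq, div_le_div_iff_of_pos_right (by positivity)]
  exact hdK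

lemma my_partial_le (s : ℕ) (c : ℕ → ℕ) (K : ℝ) (n : ℕ)
    (h : ∀ k, n ≤ k →
      sTerm s c k ≤ K / (s:ℝ) ^ (∑ j ∈ range k, c j) - K / (s:ℝ) ^ (∑ j ∈ range (k+1), c j)) :
    ∀ N, ∑ j ∈ range N, sTerm s c (j + n) ≤
      K / (s:ℝ) ^ (∑ j ∈ range n, c j) - K / (s:ℝ) ^ (∑ j ∈ range (N + n), c j) := by
  intro N
  induction N with
  | zero => simp
  | succ N ih =>
    rw [Finset.sum_range_succ]
    have h2 := h (N + n) (by omega)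
    have h3 : N + 1 + n = N + n + 1 := by omega
    rw [h3]
    linarith

lemma my_partial_ge (s : ℕ) (c : ℕ → ℕ) (K : ℝ) (n : ℕ)
    (h : ∀ k, n ≤ k →
      K / (s:ℝ) ^ (∑ j ∈ range k, c j) - K / (s:ℝ) ^ (∑ j ∈ range (k+1), c j) ≤ sTerm s c k) :
    ∀ N, K / (s:ℝ) ^ (∑ j ∈ range n, c j) - K / (s:ℝ) ^ (∑ j ∈ range (N + n), c j) ≤
      ∑ j ∈ range N, sTerm s c (j + n) := by
  intro N
  induction N with
  | zero => simp
  | succ N ih =>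
    rw [Finset.sum_range_succ]
    have h2 := h (N + n) (by omega)
    have h3 : N + 1 + n = N + n + 1 := by omega
    rw [h3]
    linarith

lemma my_tendsto_tail_zero (s : ℕ) (hs : 2 < s) (c : ℕ → ℕ) (hc : ∀ k, 1 ≤ c k) (K : ℝ)
    (hK : 0 ≤ K) (n : ℕ) :
    Tendsto (fun N => K / (s:ℝ) ^ (∑ j ∈ range (N + n), c j)) atTop (nhds 0) := by
  have hs1 : (1:ℝ) < s := by exact_mod_cast Nat.lt_of_lt_of_le (by norm_num) hs.le
  have hg : Tendsto (fun N : ℕ => K * (1/(s:ℝ)) ^ N) atTop (nhds 0) := by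
    have := tendsto_pow_atTop_nhds_zero_of_lt_one (by positivity : (0:ℝ) ≤ 1/(s:ℝ))
      (by rw [div_lt_one (by linarith)]; linarith)
    simpa using this.const_mul K
  apply squeeze_zero (fun N => by positivity) _ hg
  intro N
  have hSN : N ≤ ∑ j ∈ range (N + n), c j := le_trans (by omega) (my_sum_ge c hc (N + n))
  have h5 : (s:ℝ) ^ N ≤ (s:ℝ) ^ (∑ j ∈ range (N + n), c j) := pow_le_pow_right₀ hs1.le hSN
  rw [one_div, inv_pow, mul_comm K, ← div_eq_inv_mul]
  exact div_le_div_of_nonneg_left hK (by positivity) h5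

lemma my_tail_summable (s : ℕ) (hs : 2 < s) (c : ℕ → ℕ) (hc : ∀ k, 1 ≤ c k) (n : ℕ) :
    Summable (fun j => sTerm s c (j + n)) :=
  (summable_nat_add_iff n).mpr (my_sTerm_summable s hs c hc)

lemma my_tsum_tail_le (s : ℕ) (hs : 2 < s) (c : ℕ → ℕ) (hc : ∀ k, 1 ≤ c k) (K : ℝ)
    (hK : 0 ≤ K) (n : ℕ)
    (hstep : ∀ k, n ≤ k → (c k : ℝ) ≤ K * ((s:ℝ) ^ (c k) - 1)) :
    ∑' j, sTerm s c (j + n) ≤ K / (s:ℝ) ^ (∑ j ∈ range n, c j) := by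
  apply Summable.tsum_le_of_sum_range_le (my_tail_summable s hs c hc n)
  intro N
  have h1 := my_partial_le s c K n (fun k hk => my_step_le s hs c K k (hstep k hk)) N
  have h2 : (0:ℝ) ≤ K / (s:ℝ) ^ (∑ j ∈ range (N + n), c j) := by positivity
  linarith

lemma my_tsum_tail_ge (s : ℕ) (hs : 2 < s) (c : ℕ → ℕ) (hc : ∀ k, 1 ≤ c k) (K : ℝ)
    (hK : 0 ≤ K) (n : ℕ)
    (hstep : ∀ k, n ≤ k → K * ((s:ℝ) ^ (c k) - 1) ≤ (c k : ℝ)) :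
    K / (s:ℝ) ^ (∑ j ∈ range n, c j) ≤ ∑' j, sTerm s c (j + n) := by
  have hsum := my_tail_summable s hs c hc n
  have hpartial : Tendsto (fun N => ∑ j ∈ range N, sTerm s c (j + n)) atTop
      (nhds (∑' j, sTerm s c (j + n))) := hsum.hasSum.tendsto_sum_nat
  have h0 := my_tendsto_tail_zero s hs c hc K hK n
  have hlim : Tendsto
      (fun N => (∑ j ∈ range N, sTerm s c (j + n)) + K / (s:ℝ) ^ (∑ j ∈ range (N + n), c j))
      atTop (nhds (∑' j, sTerm s c (j + n))) := by
    simpa using hpartial.add h0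
  apply ge_of_tendsto' hlim
  intro N
  have h1 := my_partial_ge s c K n (fun k hk => my_step_ge s hs c K k (hstep k hk)) N
  linarith

lemma my_sVal_split (s : ℕ) (hs : 2 < s) (c : ℕ → ℕ) (hc : ∀ k, 1 ≤ c k) (n : ℕ) :
    sVal s c = gPart s n c + ∑' j, sTerm s c (j + n) :=
  ((my_sTerm_summable s hs c hc).sum_add_tsum_nat_add n).symm


lemma my_hs1 (s : ℕ) (hs : 2 < s) : (1:ℝ) < (s:ℝ) := by exact_mod_cast (by omega : 1 < s)

lemma my_Qpos (s : ℕ) (hs : 2 < s) : (0:ℝ) < (s:ℝ)^(s-1) - 1 := by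
  have hs1 := my_hs1 s hs
  have h : (s:ℝ) ≤ (s:ℝ)^(s-1) := le_self_pow₀ hs1.le (by omega)
  linarith

lemma my_cast_sub (s : ℕ) (hs : 2 < s) : ((s - 1 : ℕ) : ℝ) = (s:ℝ) - 1 := by
  have h1 : 1 ≤ s := by omega
  push_cast [Nat.cast_sub h1]
  ring

lemma my_digit_A (s : ℕ) (hs : 2 < s) (d : ℕ) (hd1 : 1 ≤ d) (hd2 : d ≤ s - 1) :
    ((s:ℝ)-1)/((s:ℝ)^(s-1)-1) * ((s:ℝ)^d - 1) ≤ (d:ℝ) := by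
  have hQ := my_Qpos s hs
  have hgeo := my_geom_aux (s:ℝ) (my_hs1 s hs).le hd2
  rw [my_cast_sub s hs] at hgeo
  rw [div_mul_eq_mul_div, div_le_iff₀ hQ]
  exact hgeo

lemma my_digit_A_eq (s : ℕ) (hs : 2 < s) :
    ((s:ℝ)-1)/((s:ℝ)^(s-1)-1) * ((s:ℝ)^(s-1) - 1) = ((s - 1 : ℕ) : ℝ) := by
  rw [my_cast_sub s hs, div_mul_cancel₀]
  exact (my_Qpos s hs).ne'

lemma my_digit_B (s : ℕ) (hs : 2 < s) (d : ℕ) (hd1 : 1 ≤ d) :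
    (d:ℝ) ≤ 1/((s:ℝ)-1) * ((s:ℝ)^d - 1) := by
  have hs1 := my_hs1 s hs
  have hgeo := my_geom_aux (s:ℝ) hs1.le hd1
  rw [pow_one] at hgeo
  push_cast at hgeo
  rw [div_mul_eq_mul_div, le_div_iff₀ (by linarith : (0:ℝ) < (s:ℝ)-1)]
  linarith

lemma my_digit_B_eq (s : ℕ) (hs : 2 < s) :
    1/((s:ℝ)-1) * ((s:ℝ)^(1:ℕ) - 1) = ((1 : ℕ) : ℝ) := by
  have hs1 := my_hs1 s hs
  rw [pow_one, Nat.cast_one, one_div, inv_mul_cancel₀ (by linarith : (s:ℝ)-1 ≠ 0)]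

lemma my_val_formula (s m : ℕ) (hs : 2 < s) (c c' : ℕ → ℕ) (q : ℕ)
    (hval : sValid s c') (hpre : ∀ k < m, c' k = c k) (hq : c' m = q) :
    (∑ k ∈ range (m+1), c' k = (∑ k ∈ range m, c k) + q) ∧
    sVal s c' = gPart s m c + (q:ℝ)/(s:ℝ)^((∑ k ∈ range m, c k) + q)
      + ∑' j, sTerm s c' (j + (m+1)) := by
  have hone : ∀ k, 1 ≤ c' k := fun k => (hval k).1
  have hsum_eq : ∀ k, k ≤ m → ∑ j ∈ range k, c' j = ∑ j ∈ range k, c j := by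
    intro k hk
    exact Finset.sum_congr rfl fun j hj => hpre j (lt_of_lt_of_le (mem_range.mp hj) hk)
  have hS : ∑ k ∈ range (m+1), c' k = (∑ k ∈ range m, c k) + q := by
    rw [Finset.sum_range_succ, hq, hsum_eq m le_rfl]
  refine ⟨hS, ?_⟩
  have hterm : ∀ k < m, sTerm s c' k = sTerm s c k := by
    intro k hk
    unfold sTerm
    rw [hpre k hk, hsum_eq (k+1) (by omega)]
  have hgp : gPart s (m+1) c' = gPart s m c + (q:ℝ)/(s:ℝ)^((∑ k ∈ range m, c k) + q) := by
    unfold gPart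
    rw [Finset.sum_range_succ]
    congr 1
    · exact Finset.sum_congr rfl fun k hk => hterm k (mem_range.mp hk)
    · unfold sTerm
      rw [hq, hS]
  rw [my_sVal_split s hs c' hone (m+1), hgp]

lemma my_cyl_inf (s m : ℕ) (hs : 2 < s) (c : ℕ → ℕ) (hc : ∀ k < m, 1 ≤ c k ∧ c k ≤ s - 1)
    (q : ℕ) (hq1 : 1 ≤ q) (hq2 : q ≤ s - 1) :
    sInf (cylExt s m c q) = gPart s m c +
      ((q:ℝ) + ((s:ℝ)-1)/((s:ℝ)^(s-1)-1)) / (s:ℝ) ^ ((∑ k ∈ range m, c k) + q) := by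
  set A : ℝ := ((s:ℝ)-1)/((s:ℝ)^(s-1)-1) with hA_def
  have hQ := my_Qpos s hs
  have hs1 := my_hs1 s hs
  have hA0 : 0 ≤ A := by
    apply div_nonneg <;> linarith
  set E : ℕ := (∑ k ∈ range m, c k) + q with hE_def
  set L : ℝ := gPart s m c + ((q:ℝ) + A) / (s:ℝ) ^ E with hL_def
  have hPE : (0:ℝ) < (s:ℝ)^E := by positivity
  -- lower bound for all members
  have hlow : ∀ x ∈ cylExt s m c q, L ≤ x := by
    rintro x ⟨c', hval, hpre, hcm, rfl⟩
    obtain ⟨hS, hform⟩ := my_val_formula s m hs c c' q hval hpre hcm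
    have htail : A / (s:ℝ)^E ≤ ∑' j, sTerm s c' (j + (m+1)) := by
      have := my_tsum_tail_ge s hs c' (fun k => (hval k).1) A hA0 (m+1)
        (fun k _ => my_digit_A s hs (c' k) (hval k).1 (hval k).2)
      rwa [hS] at this
    rw [hform, hL_def]
    have : ((q:ℝ) + A) / (s:ℝ)^E = (q:ℝ)/(s:ℝ)^E + A/(s:ℝ)^E := by ring
    rw [this]
    linarith
  -- the minimizing sequence
  set cMin : ℕ → ℕ := fun k => if k < m then c k else if k = m then q else s - 1 with hcMin
  have hvalMin : sValid s cMin := by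
    intro k
    by_cases h1 : k < m
    · simpa [hcMin, h1] using hc k h1
    · by_cases h2 : k = m
      · simp [hcMin, h1, h2]; omega
      · simp [hcMin, h1, h2]; omega
  have hpreMin : ∀ k < m, cMin k = c k := fun k hk => by simp [hcMin, hk]
  have hcmMin : cMin m = q := by simp [hcMin]
  have hmem : sVal s cMin ∈ cylExt s m c q := ⟨cMin, hvalMin, hpreMin, hcmMin, rfl⟩
  -- its value is exactly L
  have hvalL : sVal s cMin = L := by
    obtain ⟨hS, hform⟩ := my_val_formula s m hs c cMin q hvalMin hpreMin hcmMin
    have htail_digit : ∀ k, m+1 ≤ k → cMin k = s - 1 := by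
      intro k hk
      have h1 : ¬ k < m := by omega
      have h2 : k ≠ m := by omega
      simp [hcMin, h1, h2]
    have hle : ∑' j, sTerm s cMin (j + (m+1)) ≤ A / (s:ℝ)^E := by
      have := my_tsum_tail_le s hs cMin (fun k => (hvalMin k).1) A hA0 (m+1)
        (fun k hk => by rw [htail_digit k hk]; exact (my_digit_A_eq s hs).ge)
      rwa [hS] at this
    have hge : A / (s:ℝ)^E ≤ ∑' j, sTerm s cMin (j + (m+1)) := by
      have := my_tsum_tail_ge s hs cMin (fun k => (hvalMin k).1) A hA0 (m+1)
        (fun k hk => by rw [htail_digit k hk]; exact (my_digit_A_eq s hs).le)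
      rwa [hS] at this
    have htail : ∑' j, sTerm s cMin (j + (m+1)) = A / (s:ℝ)^E := le_antisymm hle hge
    rw [hform, htail, hL_def]
    ring
  have : sInf (cylExt s m c q) = L := by
    apply le_antisymm
    · exact csInf_le ⟨L, fun x hx => hlow x hx⟩ (hvalL ▸ hmem)
    · exact le_csInf ⟨sVal s cMin, hmem⟩ hlow
  rw [this, hL_def]

lemma my_cyl_sup (s m : ℕ) (hs : 2 < s) (c : ℕ → ℕ) (hc : ∀ k < m, 1 ≤ c k ∧ c k ≤ s - 1)
    (q : ℕ) (hq1 : 1 ≤ q) (hq2 : q ≤ s - 1) :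
    sSup (cylExt s m c q) = gPart s m c +
      ((q:ℝ) + 1/((s:ℝ)-1)) / (s:ℝ) ^ ((∑ k ∈ range m, c k) + q) := by
  set B : ℝ := 1/((s:ℝ)-1) with hB_def
  have hs1 := my_hs1 s hs
  have hB0 : 0 ≤ B := by
    apply div_nonneg <;> linarith
  set E : ℕ := (∑ k ∈ range m, c k) + q with hE_def
  set U : ℝ := gPart s m c + ((q:ℝ) + B) / (s:ℝ) ^ E with hU_def
  have hupp : ∀ x ∈ cylExt s m c q, x ≤ U := by
    rintro x ⟨c', hval, hpre, hcm, rfl⟩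
    obtain ⟨hS, hform⟩ := my_val_formula s m hs c c' q hval hpre hcm
    have htail : ∑' j, sTerm s c' (j + (m+1)) ≤ B / (s:ℝ)^E := by
      have := my_tsum_tail_le s hs c' (fun k => (hval k).1) B hB0 (m+1)
        (fun k _ => my_digit_B s hs (c' k) (hval k).1)
      rwa [hS] at this
    rw [hform, hU_def]
    have : ((q:ℝ) + B) / (s:ℝ)^E = (q:ℝ)/(s:ℝ)^E + B/(s:ℝ)^E := by ring
    rw [this]
    linarith
  set cMax : ℕ → ℕ := fun k => if k < m then c k else if k = m then q else 1 with hcMax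
  have hvalMax : sValid s cMax := by
    intro k
    by_cases h1 : k < m
    · simpa [hcMax, h1] using hc k h1
    · by_cases h2 : k = m
      · simp [hcMax, h1, h2]; omega
      · simp [hcMax, h1, h2]; omega
  have hpreMax : ∀ k < m, cMax k = c k := fun k hk => by simp [hcMax, hk]
  have hcmMax : cMax m = q := by simp [hcMax]
  have hmem : sVal s cMax ∈ cylExt s m c q := ⟨cMax, hvalMax, hpreMax, hcmMax, rfl⟩
  have hvalU : sVal s cMax = U := by
    obtain ⟨hS, hform⟩ := my_val_formula s m hs c cMax q hvalMax hpreMax hcmMax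
    have htail_digit : ∀ k, m+1 ≤ k → cMax k = 1 := by
      intro k hk
      have h1 : ¬ k < m := by omega
      have h2 : k ≠ m := by omega
      simp [hcMax, h1, h2]
    have hle : ∑' j, sTerm s cMax (j + (m+1)) ≤ B / (s:ℝ)^E := by
      have := my_tsum_tail_le s hs cMax (fun k => (hvalMax k).1) B hB0 (m+1)
        (fun k hk => by rw [htail_digit k hk]; exact (my_digit_B_eq s hs).ge)
      rwa [hS] at this
    have hge : B / (s:ℝ)^E ≤ ∑' j, sTerm s cMax (j + (m+1)) := by
      have := my_tsum_tail_ge s hs cMax (fun k => (hvalMax k).1) B hB0 (m+1)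
        (fun k hk => by rw [htail_digit k hk]; exact (my_digit_B_eq s hs).le)
      rwa [hS] at this
    have htail : ∑' j, sTerm s cMax (j + (m+1)) = B / (s:ℝ)^E := le_antisymm hle hge
    rw [hform, htail, hU_def]
    ring
  have : sSup (cylExt s m c q) = U := by
    apply le_antisymm
    · exact csSup_le ⟨sVal s cMax, hmem⟩ hupp
    · exact le_csSup ⟨U, fun x hx => hupp x hx⟩ (hvalU ▸ hmem)
  rw [this, hU_def]

theorem stmt7 (s m : ℕ) (hs : 2 < s) (c : ℕ → ℕ) (hc : ∀ k < m, 1 ≤ c k ∧ c k ≤ s - 1)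
    (p : ℕ) (hp : 1 ≤ p) (hps : p ≤ s - 2) :
    sSup (cylExt s m c (p + 1)) < sInf (cylExt s m c p) ∧
      sInf (cylExt s m c p) - sSup (cylExt s m c (p + 1)) =
        (((s : ℝ) ^ (s - 1) - 1) * ((p : ℝ) * ((s : ℝ) - 1) ^ 2 - s) + (s : ℝ) * ((s : ℝ) - 1) ^ 2) /
          (((s : ℝ) - 1) * ((s : ℝ) ^ (s - 1) - 1) *
            (s : ℝ) ^ ((∑ k ∈ Finset.range m, c k) + p + 1)) ∧
      0 < ((s : ℝ) ^ (s - 1) - 1) * ((p : ℝ) * ((s : ℝ) - 1) ^ 2 - s) + (s : ℝ) * ((s : ℝ) - 1) ^ 2 := by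
  have hs1 := my_hs1 s hs
  have hs3 : (3:ℝ) ≤ (s:ℝ) := by exact_mod_cast (by omega : 3 ≤ s)
  have hQ := my_Qpos s hs
  have hp1 : (1:ℝ) ≤ (p:ℝ) := by exact_mod_cast hp
  have hInf := my_cyl_inf s m hs c hc p hp (by omega)
  have hSup := my_cyl_sup s m hs c hc (p+1) (by omega) (by omega)
  have hexp : (∑ k ∈ range m, c k) + (p+1) = ((∑ k ∈ range m, c k) + p) + 1 := by omega
  rw [hexp] at hSup
  have hPpos : (0:ℝ) < (s:ℝ) ^ ((∑ k ∈ range m, c k) + p) := by positivity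
  -- positivity of the numerator
  have hNpos : 0 < ((s : ℝ) ^ (s - 1) - 1) * ((p : ℝ) * ((s : ℝ) - 1) ^ 2 - s)
      + (s : ℝ) * ((s : ℝ) - 1) ^ 2 := by
    have h1 : ((s:ℝ) - 1)^2 ≤ (p:ℝ) * ((s:ℝ) - 1)^2 := le_mul_of_one_le_left (by positivity) hp1
    have h2 : (1:ℝ) ≤ ((s:ℝ)-1)^2 - (s:ℝ) := by nlinarith
    nlinarith [mul_le_mul_of_nonneg_left (by linarith : ((s:ℝ)-1)^2 - (s:ℝ) ≤ (p:ℝ) * ((s:ℝ) - 1)^2 - s) hQ.le]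
  -- the difference formula
  have hdiff : sInf (cylExt s m c p) - sSup (cylExt s m c (p + 1)) =
      (((s : ℝ) ^ (s - 1) - 1) * ((p : ℝ) * ((s : ℝ) - 1) ^ 2 - s) + (s : ℝ) * ((s : ℝ) - 1) ^ 2) /
        (((s : ℝ) - 1) * ((s : ℝ) ^ (s - 1) - 1) *
          (s : ℝ) ^ ((∑ k ∈ Finset.range m, c k) + p + 1)) := by
    rw [hInf, hSup]
    rw [pow_succ]
    push_cast
    have hne1 : ((s:ℝ) ^ ((∑ k ∈ range m, c k) + p)) ≠ 0 := hPpos.ne'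
    have hne2 : (s:ℝ) - 1 ≠ 0 := by linarith
    have hne3 : (s:ℝ) ^ (s-1) - 1 ≠ 0 := hQ.ne'
    have hne4 : (s:ℝ) ≠ 0 := by linarith
    field_simp
    ring
  refine ⟨?_, hdiff, hNpos⟩
  have hDpos : (0:ℝ) < ((s : ℝ) - 1) * ((s : ℝ) ^ (s - 1) - 1) *
      (s : ℝ) ^ ((∑ k ∈ Finset.range m, c k) + p + 1) := by
    apply mul_pos (mul_pos (by linarith) hQ) (by positivity)
  have : 0 < sInf (cylExt s m c p) - sSup (cylExt s m c (p + 1)) := by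
    rw [hdiff]
    positivity
  linarith
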